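/- For all natural numbers n ≥ 1 and k with 1 ≤ k ≤ n, the following identity of polynomials in w holds: Σ_m D(n,m,k) w^m = Σ_{j=k}^{n} (−1)^{j−k} C(n,j) C(j,k) (1+w)^{j(n−j)} A_{n−j}(w), where A_i(w) = Σ_m D(i,m) w^m. -/

import Mathlib

/-- A finite labelled digraph (edge set on `Fin n`) is acyclic if the transitive
closure of its edge relation is irreflexive. -/
def DAcyclic {n : ℕ} (E : Finset (Fin n × Fin n)) : Prop :=
  Irreflexive (Relation.TransGen fun a b => (a, b) ∈ E)

/-- Sources of a digraph: vertices with no incoming edge. -/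
def dagSources {n : ℕ} (E : Finset (Fin n × Fin n)) : Finset (Fin n) :=
  Finset.univ.filter fun v => ∀ u, (u, v) ∉ E

open Classical in
/-- `Dcount n m k` = number of labelled DAGs on `n` vertices with `m` edges and
exactly `k` sources. -/
noncomputable def Dcount (n m k : ℕ) : ℕ :=
  (Finset.univ.filter fun E : Finset (Fin n × Fin n) =>
    DAcyclic E ∧ E.card = m ∧ (dagSources E).card = k).card

open Classical in
/-- `DcountE n m` = number of labelled DAGs on `n` vertices with `m` edges. -/
noncomputable def DcountE (n m : ℕ) : ℕ :=
  (Finset.univ.filter fun E : Finset (Fin n × Fin n) =>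
    DAcyclic E ∧ E.card = m).card

open Classical in
lemma aux_tsum_weight (n : ℕ) (P : Finset (Fin n × Fin n) → Prop) (w : ℝ) :
    ∑' m : ℕ, (((Finset.univ.filter fun E : Finset (Fin n × Fin n) => P E ∧ E.card = m)).card : ℝ) * w ^ m
      = ∑ E ∈ Finset.univ.filter P, w ^ E.card := by
  classical
  have hcard : ∀ E : Finset (Fin n × Fin n), E.card ≤ n * n := by
    intro E
    have := Finset.card_le_univ E
    simpa using this
  rw [tsum_eq_sum (s := Finset.range (n * n + 1)) ?_]
  · rw [← Finset.sum_fiberwise_of_maps_to (g := fun E : Finset (Fin n × Fin n) => E.card)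
      (t := Finset.range (n * n + 1))
      (fun E _ => Finset.mem_range.2 (Nat.lt_succ_of_le (hcard E))) (fun E => w ^ E.card)]
    refine Finset.sum_congr rfl fun m _ => ?_
    rw [Finset.filter_filter]
    rw [Finset.sum_congr rfl (fun E hE => by rw [(Finset.mem_filter.1 hE).2.2])]
    rw [Finset.sum_const, nsmul_eq_mul]
  · intro m hm
    have : (Finset.univ.filter fun E : Finset (Fin n × Fin n) => P E ∧ E.card = m) = ∅ := by
      refine Finset.filter_eq_empty_iff.2 fun E _ => ?_
      rintro ⟨-, h⟩
      have h1 := hcard E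
      have h2 : ¬ m < n * n + 1 := by simpa using hm
      omega
    rw [this]
    simp

open Finset in
lemma aux_alt {α : Type*} [DecidableEq α] (S : Finset α) (k : ℕ) :
    ∑ T ∈ S.powerset, (-1 : ℝ) ^ (T.card - k) * (T.card.choose k)
      = if S.card = k then 1 else 0 := by
  classical
  rw [← Finset.sum_fiberwise_of_maps_to (g := fun T : Finset α => T.card)
      (t := Finset.range (S.card + 1))
      (fun T hT => Finset.mem_range.2 (Nat.lt_succ_of_le (Finset.card_le_card (Finset.mem_powerset.1 hT))))
      (fun T => (-1 : ℝ) ^ (T.card - k) * (T.card.choose k))]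
  have hfib : ∀ j, (S.powerset.filter fun T => T.card = j) = Finset.powersetCard j S := by
    intro j; rw [Finset.powersetCard_eq_filter]
  calc ∑ j ∈ Finset.range (S.card + 1), ∑ T ∈ S.powerset.filter (fun T => T.card = j),
          (-1 : ℝ) ^ (T.card - k) * (T.card.choose k)
      = ∑ j ∈ Finset.range (S.card + 1), (S.card.choose j : ℝ) * ((-1 : ℝ) ^ (j - k) * (j.choose k)) := by
        refine Finset.sum_congr rfl fun j _ => ?_
        rw [Finset.sum_congr rfl (fun T hT => by
          rw [(Finset.mem_filter.1 hT).2]), Finset.sum_const, hfib, Finset.card_powersetCard,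
          nsmul_eq_mul]
    _ = if S.card = k then 1 else 0 := ?_
  set s := S.card with hs
  by_cases hks : k ≤ s
  · rw [← Finset.sum_subset (s₁ := Finset.Ico k (s + 1))
      (fun j hj => Finset.mem_range.2 (Finset.mem_Ico.1 hj).2)
      (fun j hj hj2 => by
        have hjk : j < k := by
          have h1 := Finset.mem_range.1 hj
          have h2 : ¬ (k ≤ j ∧ j < s + 1) := by simpa [Finset.mem_Ico] using hj2
          omega
        rw [Nat.choose_eq_zero_of_lt hjk]
        simp)]
    · rw [Finset.sum_Ico_eq_sum_range]
      have hlen : s + 1 - k = (s - k) + 1 := by omega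
      rw [hlen]
      have hterm : ∀ i ∈ Finset.range ((s - k) + 1),
          (s.choose (k + i) : ℝ) * ((-1 : ℝ) ^ ((k + i) - k) * ((k + i).choose k))
            = (s.choose k : ℝ) * ((-1 : ℝ) ^ i * ((s - k).choose i)) := by
        intro i hi
        have hik : k + i ≤ s := by
          have := Finset.mem_range.1 hi; omega
        have h1 : s.choose (k + i) * (k + i).choose k = s.choose k * (s - k).choose i := by
          have := Nat.choose_mul (n := s) (k := k + i) (s := k) (Nat.le_add_right k i)
          simpa using this
        have h1' := congrArg (fun x : ℕ => (x : ℝ)) h1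
        push_cast at h1'
        have h2 : (k + i) - k = i := by omega
        rw [h2]
        linear_combination (-1:ℝ)^i * h1'
      rw [Finset.sum_congr rfl hterm, ← Finset.mul_sum]
      have halt : ∑ i ∈ Finset.range ((s - k) + 1), (-1 : ℝ) ^ i * ((s - k).choose i)
          = if s - k = 0 then 1 else 0 := by
        have := Int.alternating_sum_range_choose (n := s - k)
        have := congrArg (fun z : ℤ => (z : ℝ)) this
        push_cast at this
        convert this using 2
      rw [halt]
      by_cases hsk : s = k
      · simp [hsk]
      · have : s - k ≠ 0 := by omega
        simp [this, hsk]
  · have : ∀ j ∈ Finset.range (s + 1), (s.choose j : ℝ) * ((-1 : ℝ) ^ (j - k) * (j.choose k)) = 0 := by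
      intro j hj
      have : j < k := by have := Finset.mem_range.1 hj; omega
      rw [Nat.choose_eq_zero_of_lt this]
      simp
    rw [Finset.sum_congr rfl this]
    have : ¬ s = k := by omega
    simp [this]


open Finset in
lemma aux_sum_filter_and {α M : Type*} [AddCommMonoid M] (s : Finset α) (p q : α → Prop)
    [DecidablePred p] [DecidablePred q] [DecidablePred fun a => p a ∧ q a] (f : α → M) :
    ∑ x ∈ s.filter (fun a => p a ∧ q a), f x
      = ∑ x ∈ s.filter p, (if q x then f x else 0) := by
  rw [Finset.sum_filter, Finset.sum_filter]
  refine Finset.sum_congr rfl fun x _ => ?_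
  by_cases hp : p x <;> by_cases hq : q x <;> simp [hp, hq]

open Finset Relation Classical in
lemma aux_decomp (n : ℕ) (T : Finset (Fin n)) (w : ℝ) :
    ∑ E ∈ Finset.univ.filter (fun E : Finset (Fin n × Fin n) =>
        DAcyclic E ∧ ∀ v ∈ T, ∀ u, (u, v) ∉ E), w ^ E.card
      = (1 + w) ^ (T.card * (n - T.card)) *
        ∑ B ∈ Finset.univ.filter
            (fun B : Finset (Fin (n - T.card) × Fin (n - T.card)) => DAcyclic B), w ^ B.card := by
  classical
  set r := n - T.card with hr
  set c : Finset (Fin n) := Tᶜ with hc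
  have hcc : c.card = r := by
    simp [hc, hr, Finset.card_compl]
  set iso := c.orderIsoOfFin hcc with hiso
  set e : Fin r → Fin n := fun i => (iso i : Fin n) with he
  have hei : Function.Injective e := fun a b hab => iso.injective (Subtype.ext hab)
  have hec : ∀ i, e i ∈ c := fun i => (iso i).2
  have hesymm : ∀ (x : Fin n) (hx : x ∈ c), e (iso.symm ⟨x, hx⟩) = x := by
    intro x hx; simp [he]
  have hsurj : ∀ x ∈ c, ∃ i, e i = x := fun x hx => ⟨iso.symm ⟨x, hx⟩, hesymm x hx⟩
  have hmemc : ∀ x : Fin n, x ∈ c ↔ x ∉ T := fun x => Finset.mem_compl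
  -- pair embedding
  set embPair : (Fin r × Fin r) ↪ (Fin n × Fin n) :=
    ⟨fun q => (e q.1, e q.2), fun a b hab => by
      rcases Prod.mk.injEq .. ▸ hab with ⟨h1, h2⟩
      exact Prod.ext (hei h1) (hei h2)⟩ with hemb
  set encode : Finset (Fin n × Fin n) → Finset (Fin r × Fin r) :=
    fun E => Finset.univ.filter (fun q => (e q.1, e q.2) ∈ E) with henc
  have hmem_enc : ∀ (E : Finset (Fin n × Fin n)) (q : Fin r × Fin r),
      q ∈ encode E ↔ (e q.1, e q.2) ∈ E := by
    intro E q; simp [henc]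
  -- encode maps acyclic to acyclic
  have acyc_fwd : ∀ E : Finset (Fin n × Fin n), DAcyclic E → DAcyclic (encode E) := by
    intro E hE x hx
    exact hE (e x) (Relation.TransGen.lift (p := fun a b => (a, b) ∈ E) e (fun a b hab => (hmem_enc E (a, b)).1 hab) x x hx)
  -- targets of paths avoid T
  have htgt : ∀ (E : Finset (Fin n × Fin n)), (∀ v ∈ T, ∀ u, (u, v) ∉ E) →
      ∀ x y, Relation.TransGen (fun a b => (a, b) ∈ E) x y → y ∈ c := by
    intro E hni x y h
    induction h with
    | single h' => exact (hmemc _).2 fun hT => hni _ hT _ h'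
    | tail h₁ h₂ _ => exact (hmemc _).2 fun hT => hni _ hT _ h₂
  have acyc_bwd : ∀ E : Finset (Fin n × Fin n), (∀ v ∈ T, ∀ u, (u, v) ∉ E) →
      DAcyclic (encode E) → DAcyclic E := by
    intro E hni hB a hcyc
    have ha : a ∈ c := htgt E hni a a hcyc
    have key : ∀ x y, Relation.TransGen (fun a b => (a, b) ∈ E) x y →
        ∀ (hx : x ∈ c) (hy : y ∈ c),
        Relation.TransGen (fun p q => (p, q) ∈ encode E) (iso.symm ⟨x, hx⟩) (iso.symm ⟨y, hy⟩) := by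
      intro x y h
      induction h with
      | single h' =>
        intro hx hy
        refine Relation.TransGen.single ((hmem_enc E _).2 ?_)
        rw [hesymm x hx, hesymm _ hy]
        exact h'
      | @tail b z h₁ h₂ ih =>
        intro hx hz
        have hb : b ∈ c := htgt E hni _ _ h₁
        refine Relation.TransGen.tail (ih hx hb) ((hmem_enc E _).2 ?_)
        rw [hesymm _ hb, hesymm _ hz]
        exact h₂
    exact hB _ (key a a hcyc ha ha)
  -- structure facts
  have hEfilters : ∀ E : Finset (Fin n × Fin n), (∀ v ∈ T, ∀ u, (u, v) ∉ E) →
      (encode E).map embPair = E.filter (fun p => p.1 ∈ c) := by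
    intro E hni
    ext ⟨x, y⟩
    simp only [Finset.mem_map, Finset.mem_filter, hmem_enc]
    constructor
    · rintro ⟨⟨a, b⟩, hab, habe⟩
      have h1 : e a = x ∧ e b = y := by
        have habe' : (e a, e b) = (x, y) := habe
        simpa [Prod.ext_iff] using habe'
      exact ⟨by rw [← h1.1, ← h1.2]; exact hab, h1.1 ▸ hec a⟩
    · rintro ⟨hxy, hxc⟩
      have hyc : y ∈ c := (hmemc y).2 fun hT => hni _ hT _ hxy
      obtain ⟨a, ha⟩ := hsurj x hxc
      obtain ⟨b, hb⟩ := hsurj y hyc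
      exact ⟨(a, b), by rw [ha, hb]; exact hxy, by show (e a, e b) = (x, y); rw [ha, hb]⟩
  have henc_dec : ∀ A ∈ (T ×ˢ c).powerset, ∀ B : Finset (Fin r × Fin r),
      encode (A ∪ B.map embPair) = B := by
    intro A hA B
    have hAsub := Finset.mem_powerset.1 hA
    ext q
    rw [hmem_enc, Finset.mem_union]
    constructor
    · rintro (h | h)
      · exact absurd ((hmemc _).1 (hec q.1)) (fun _ => (Finset.mem_product.1 (hAsub h)).1 |> fun hh => ((hmemc _).1 (hec q.1)) hh)
      · obtain ⟨q', hq', hq'e⟩ := Finset.mem_map.1 h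
        have : q' = q := embPair.injective (by have h' : (e q'.1, e q'.2) = (e q.1, e q.2) := hq'e; exact h')
        exact this ▸ hq'
    · intro hq
      exact Or.inr (Finset.mem_map.2 ⟨q, hq, rfl⟩)
  have hfilt_dec : ∀ A ∈ (T ×ˢ c).powerset, ∀ B : Finset (Fin r × Fin r),
      (A ∪ B.map embPair).filter (fun p => p.1 ∈ T) = A := by
    intro A hA B
    have hAsub := Finset.mem_powerset.1 hA
    ext p
    simp only [Finset.mem_filter, Finset.mem_union, Finset.mem_map]
    constructor
    · rintro ⟨h | h, hpT⟩
      · exact h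
      · obtain ⟨q', _, hq'e⟩ := h
        exfalso
        have : p.1 ∈ c := by
          rw [← hq'e]; exact hec q'.1
        exact (hmemc _).1 this hpT
    · intro hp
      exact ⟨Or.inl hp, (Finset.mem_product.1 (hAsub hp)).1⟩
  have hnoIn_dec : ∀ A ∈ (T ×ˢ c).powerset, ∀ B : Finset (Fin r × Fin r),
      ∀ v ∈ T, ∀ u, (u, v) ∉ (A ∪ B.map embPair) := by
    intro A hA B v hv u huv
    have hAsub := Finset.mem_powerset.1 hA
    rcases Finset.mem_union.1 huv with h | h
    · exact (hmemc v).1 (Finset.mem_product.1 (hAsub h)).2 hv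
    · obtain ⟨q', _, hq'e⟩ := Finset.mem_map.1 h
      have : v ∈ c := by
        have h0 : (e q'.1, e q'.2) = (u, v) := hq'e
        have h2 : e q'.2 = v := (Prod.ext_iff.1 h0).2
        rw [← h2]; exact hec q'.2
      exact (hmemc v).1 this hv
  -- the powerset sum
  have hApow : ∑ A ∈ (T ×ˢ c).powerset, w ^ A.card = (1 + w) ^ (T.card * r) := by
    have h := Finset.sum_pow_mul_eq_add_pow w 1 (T ×ˢ c)
    simp only [one_pow, mul_one] at h
    rw [h, Finset.card_product, hcc, add_comm]
  have hprod : (1 + w) ^ (T.card * r) *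
        ∑ B ∈ Finset.univ.filter (fun B : Finset (Fin r × Fin r) => DAcyclic B), w ^ B.card
      = ∑ P ∈ (T ×ˢ c).powerset ×ˢ
          (Finset.univ.filter (fun B : Finset (Fin r × Fin r) => DAcyclic B)),
          w ^ P.1.card * w ^ P.2.card := by
    rw [← hApow, Finset.sum_mul_sum, Finset.sum_product]
  rw [hprod]
  refine Finset.sum_nbij' (i := fun E => (E.filter (fun p => p.1 ∈ T), encode E))
    (j := fun P => P.1 ∪ P.2.map embPair) ?_ ?_ ?_ ?_ ?_
  · intro E hE
    have h' := Finset.mem_filter.1 hE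
    have hEa := h'.2.1
    have hni := h'.2.2
    rw [Finset.mem_product]
    constructor
    · rw [Finset.mem_powerset]
      intro p hp
      obtain ⟨hpE, hpT⟩ := Finset.mem_filter.1 hp
      rw [Finset.mem_product]
      exact ⟨hpT, (hmemc _).2 fun hT => hni _ hT _ hpE⟩
    · simp only [Finset.mem_filter, Finset.mem_univ, true_and]
      exact acyc_fwd E hEa
  · intro P hP
    obtain ⟨hP1, hP2⟩ := Finset.mem_product.1 hP
    have hBa : DAcyclic P.2 := (Finset.mem_filter.1 hP2).2
    simp only [Finset.mem_filter, Finset.mem_univ, true_and]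
    refine ⟨?_, hnoIn_dec P.1 hP1 P.2⟩
    apply acyc_bwd _ (hnoIn_dec P.1 hP1 P.2)
    rw [henc_dec P.1 hP1 P.2]
    exact hBa
  · intro E hE
    have hni : ∀ v ∈ T, ∀ u, (u, v) ∉ E := (Finset.mem_filter.1 hE).2.2
    simp only
    rw [hEfilters E hni]
    have hcongr : E.filter (fun p => p.1 ∈ c) = E.filter (fun p => ¬ p.1 ∈ T) := by
      apply Finset.filter_congr
      intro p _
      simp [hmemc]
    rw [hcongr, Finset.filter_union_filter_not_eq]
  · intro P hP
    obtain ⟨hP1, hP2⟩ := Finset.mem_product.1 hP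
    exact Prod.ext (hfilt_dec P.1 hP1 P.2) (henc_dec P.1 hP1 P.2)
  · intro E hE
    have hni : ∀ v ∈ T, ∀ u, (u, v) ∉ E := (Finset.mem_filter.1 hE).2.2
    have hcard : E.card = (E.filter (fun p => p.1 ∈ T)).card + (encode E).card := by
      have h1 : (encode E).card = (E.filter (fun p => p.1 ∈ c)).card := by
        rw [← hEfilters E hni, Finset.card_map]
      have hcongr : E.filter (fun p => p.1 ∈ c) = E.filter (fun p => ¬ p.1 ∈ T) := by
        apply Finset.filter_congr
        intro p _
        simp [hmemc]
      rw [h1, hcongr, Finset.card_filter_add_card_filter_not]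
    rw [hcard, pow_add]

/-- For $1 \le k \le n$:
$\sum_m D(n,m,k) w^m = \sum_{j=k}^n (-1)^{j-k}\binom nj \binom jk (1+w)^{j(n-j)} A_{n-j}(w)$. -/
theorem dag_sources_by_inclusion_exclusion (n k : ℕ) (hn : 1 ≤ n) (hk : 1 ≤ k)
    (hkn : k ≤ n) (w : ℝ) :
    ∑' m : ℕ, (Dcount n m k : ℝ) * w ^ m
      = ∑ j ∈ Finset.Icc k n,
          (-1 : ℝ) ^ (j - k) * (n.choose j) * (j.choose k) * (1 + w) ^ (j * (n - j))
            * ∑' m : ℕ, (DcountE (n - j) m : ℝ) * w ^ m := by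
  classical
  -- RHS tsum as edge-set sum
  have hA : ∀ j : ℕ, ∑' m : ℕ, (DcountE j m : ℝ) * w ^ m
      = ∑ E ∈ Finset.univ.filter (fun E : Finset (Fin j × Fin j) => DAcyclic E), w ^ E.card := by
    intro j
    rw [← aux_tsum_weight j DAcyclic w]
    rfl
  -- LHS as edge-set sum
  have hL : ∑' m : ℕ, (Dcount n m k : ℝ) * w ^ m
      = ∑ E ∈ Finset.univ.filter
          (fun E : Finset (Fin n × Fin n) => DAcyclic E ∧ (dagSources E).card = k), w ^ E.card := by
    have h := aux_tsum_weight n (fun E => DAcyclic E ∧ (dagSources E).card = k) w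
    refine Eq.trans (tsum_congr fun m => ?_) (h.trans ?_)
    · congr 1
      norm_cast
      unfold Dcount
      apply congrArg Finset.card
      ext E
      simp only [Finset.mem_filter]
      tauto
    · refine Finset.sum_congr ?_ fun _ _ => rfl
      ext E
      simp only [Finset.mem_filter]
  rw [hL]
  -- subset-of-sources characterization
  have hsub : ∀ (Tt : Finset (Fin n)) (E : Finset (Fin n × Fin n)),
      Tt ⊆ dagSources E ↔ ∀ v ∈ Tt, ∀ u, (u, v) ∉ E := by
    intro Tt E
    constructor
    · intro h v hv u
      have := h hv
      simp only [dagSources, Finset.mem_filter] at this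
      exact this.2 u
    · intro h x hx
      simp only [dagSources, Finset.mem_filter, Finset.mem_univ, true_and]
      exact h x hx
  calc ∑ E ∈ Finset.univ.filter
          (fun E : Finset (Fin n × Fin n) => DAcyclic E ∧ (dagSources E).card = k), w ^ E.card
      = ∑ E ∈ Finset.univ.filter (fun E : Finset (Fin n × Fin n) => DAcyclic E),
          (if (dagSources E).card = k then (1:ℝ) else 0) * w ^ E.card := by
        rw [aux_sum_filter_and (Finset.univ) DAcyclic
          (fun E => (dagSources E).card = k) (fun E => w ^ E.card)]
        refine Finset.sum_congr rfl fun E _ => ?_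
        split <;> simp
    _ = ∑ E ∈ Finset.univ.filter (fun E : Finset (Fin n × Fin n) => DAcyclic E),
          ∑ Tt ∈ (Finset.univ : Finset (Finset (Fin n))),
            (if Tt ⊆ dagSources E then
              ((-1 : ℝ) ^ (Tt.card - k) * (Tt.card.choose k)) * w ^ E.card else 0) := by
        refine Finset.sum_congr rfl fun E _ => ?_
        rw [← aux_alt (dagSources E) k]
        have hps : (dagSources E).powerset
            = (Finset.univ : Finset (Finset (Fin n))).filter (fun Tt => Tt ⊆ dagSources E) := by
          ext Tt; simp
        rw [hps, Finset.sum_filter, Finset.sum_mul]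
        refine Finset.sum_congr rfl fun Tt _ => ?_
        split <;> simp
    _ = ∑ Tt ∈ (Finset.univ : Finset (Finset (Fin n))),
          ((-1 : ℝ) ^ (Tt.card - k) * (Tt.card.choose k)) *
            ∑ E ∈ Finset.univ.filter
              (fun E : Finset (Fin n × Fin n) => DAcyclic E ∧ ∀ v ∈ Tt, ∀ u, (u, v) ∉ E),
              w ^ E.card := by
        rw [Finset.sum_comm]
        refine Finset.sum_congr rfl fun Tt _ => ?_
        rw [aux_sum_filter_and (Finset.univ) DAcyclic
          (fun E => ∀ v ∈ Tt, ∀ u, (u, v) ∉ E) (fun E => w ^ E.card), Finset.mul_sum]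
        refine Finset.sum_congr rfl fun E _ => ?_
        rw [mul_ite, mul_zero]
        exact if_congr (hsub Tt E) rfl rfl
    _ = ∑ Tt ∈ (Finset.univ : Finset (Finset (Fin n))),
          ((-1 : ℝ) ^ (Tt.card - k) * (Tt.card.choose k)) *
            ((1 + w) ^ (Tt.card * (n - Tt.card)) *
              ∑ B ∈ Finset.univ.filter
                (fun B : Finset (Fin (n - Tt.card) × Fin (n - Tt.card)) => DAcyclic B),
                w ^ B.card) := by
        refine Finset.sum_congr rfl fun Tt _ => ?_
        rw [aux_decomp n Tt w]
    _ = ∑ j ∈ Finset.range (n + 1),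
          (n.choose j : ℝ) * (((-1 : ℝ) ^ (j - k) * (j.choose k)) *
            ((1 + w) ^ (j * (n - j)) *
              ∑ B ∈ Finset.univ.filter
                (fun B : Finset (Fin (n - j) × Fin (n - j)) => DAcyclic B), w ^ B.card)) := by
        rw [← Finset.sum_fiberwise_of_maps_to (g := fun Tt : Finset (Fin n) => Tt.card)
          (t := Finset.range (n + 1))
          (fun Tt _ => Finset.mem_range.2 (Nat.lt_succ_of_le (by
            simpa using Finset.card_le_univ Tt)))]
        refine Finset.sum_congr rfl fun j _ => ?_
        rw [Finset.sum_congr rfl (fun Tt hTt => by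
          rw [(Finset.mem_filter.1 hTt).2])]
        rw [Finset.sum_const, nsmul_eq_mul]
        congr 2
        have : (Finset.univ : Finset (Finset (Fin n))).filter (fun Tt => Tt.card = j)
            = Finset.powersetCard j (Finset.univ : Finset (Fin n)) := by
          rw [Finset.powersetCard_eq_filter, Finset.powerset_univ]
        rw [this, Finset.card_powersetCard]
        simp
    _ = ∑ j ∈ Finset.Icc k n,
          (-1 : ℝ) ^ (j - k) * (n.choose j) * (j.choose k) * (1 + w) ^ (j * (n - j))
            * ∑' m : ℕ, (DcountE (n - j) m : ℝ) * w ^ m := by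
        rw [← Finset.sum_subset (s₁ := Finset.Icc k n)
          (fun j hj => Finset.mem_range.2 (Nat.lt_succ_of_le (Finset.mem_Icc.1 hj).2))
          (fun j hj hj2 => by
            have hjn : j ≤ n := by
              have := Finset.mem_range.1 hj; omega
            have hjk : j < k := by
              have h2 : ¬ (k ≤ j ∧ j ≤ n) := by simpa [Finset.mem_Icc] using hj2
              omega
            rw [Nat.choose_eq_zero_of_lt hjk]
            simp)]
        refine Finset.sum_congr rfl fun j _ => ?_
        rw [hA (n - j)]
        ring
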